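/- arXiv:2308.10102 — 3 statements merged into one kernel-verified Lean document; each statement's English description precedes it below -/
import Mathlib

section
/- Let d be a positive integer, let 0 ≤ q ≤ d be an integer, let e_1, …, e_d be the standard basis of ℝ^d and e = e_1 + ⋯ + e_d. For any (not necessarily distinct) standard basis vectors v_1, …, v_{d−q} ∈ {e_1, …, e_d}, the vector ∑_{t=1}^{d−q} v_t − (q/d)·e has ℓ1 norm at least ((d−q)^2 + q^2)/d, and ((d−q)^2 + q^2)/d ≥ d/2. -/
/-- The column estimate of the ℓ1 example: if `v_1, …, v_{d-q}` are (not
necessarily distinct) standard basis vectors of `ℝ^d` (with the ℓ1 norm) and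
`e = e_1 + ⋯ + e_d`, then `∑ v_t - (q/d) e` has ℓ1 norm at least
`((d-q)^2 + q^2)/d`, and `((d-q)^2 + q^2)/d ≥ d/2`. -/
theorem l1_column_estimate
    (d q : ℕ) (hd : 0 < d) (hq : q ≤ d)
    (v : Fin (d - q) → PiLp 1 (fun _ : Fin d => ℝ))
    (hv : ∀ t, ∃ i : Fin d,
      v t = (WithLp.equiv 1 (Fin d → ℝ)).symm (Pi.single i 1)) :
    (((d : ℝ) - q) ^ 2 + (q : ℝ) ^ 2) / d ≤
      ‖(∑ t : Fin (d - q), v t) -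
        ((q : ℝ) / d) • (WithLp.equiv 1 (Fin d → ℝ)).symm (fun _ => 1)‖ ∧
    (d : ℝ) / 2 ≤ (((d : ℝ) - q) ^ 2 + (q : ℝ) ^ 2) / d := by
  have hd0 : (0:ℝ) < d := by exact_mod_cast hd
  have hdne : (d:ℝ) ≠ 0 := ne_of_gt hd0
  constructor
  · choose j hj using hv
    set f : Fin d → ℝ := fun i => ((Finset.univ.filter (fun t => j t = i)).card : ℝ) with hf
    have hnorm : ‖(∑ t : Fin (d - q), v t) -
        ((q : ℝ) / d) • (WithLp.equiv 1 (Fin d → ℝ)).symm (fun _ => 1)‖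
        = ∑ i : Fin d, |f i - q / d| := by
      rw [PiLp.norm_eq_sum (by norm_num)]
      simp only [ENNReal.toReal_one, Real.rpow_one, one_div_one]
      apply Finset.sum_congr rfl
      intro i _
      have : ((∑ t : Fin (d - q), v t) -
          ((q : ℝ) / d) • (WithLp.equiv 1 (Fin d → ℝ)).symm (fun _ => 1)) i
          = f i - q / d := by
        simp only [PiLp.sub_apply, PiLp.smul_apply]
        congr 1
        · have h2 : ∀ t, (v t) i = if j t = i then (1:ℝ) else 0 := by
            intro t
            rw [hj t]
            simp [WithLp.equiv_symm_apply, PiLp.toLp_apply, Pi.single_apply, eq_comm]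
          rw [show (∑ t : Fin (d - q), v t) i = ∑ t : Fin (d - q), (v t) i
              from by rw [WithLp.ofLp_sum, Finset.sum_apply]]
          rw [Finset.sum_congr rfl (fun t _ => h2 t)]
          simp [hf]
        · simp [WithLp.equiv_symm_apply, PiLp.toLp_apply]
      rw [this, Real.norm_eq_abs]
    rw [hnorm]
    set S : Finset (Fin d) := Finset.image j Finset.univ with hS
    have hsle : S.card ≤ d - q := by
      simpa using Finset.card_image_le (f := j) (s := Finset.univ)
    have hf0 : ∀ i ∉ S, f i = 0 := by
      intro i hi
      show ((Finset.univ.filter (fun t => j t = i)).card : ℝ) = 0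
      norm_cast
      rw [Finset.card_eq_zero, Finset.filter_eq_empty_iff]
      intro t _ hti
      exact hi (hti ▸ Finset.mem_image_of_mem j (Finset.mem_univ t))
    have hfsum : ∑ i ∈ S, f i = (d - q : ℕ) := by
      have h1 : ∑ i : Fin d, f i = (d - q : ℕ) := by
        have := Finset.card_eq_sum_card_fiberwise
          (f := j) (s := Finset.univ) (t := Finset.univ) (fun t _ => Finset.mem_univ _)
        simp only [Finset.card_univ, Fintype.card_fin] at this
        rw [hf]; push_cast [this]; rfl
      rw [← h1]
      exact Finset.sum_subset (Finset.subset_univ S) (fun x _ hx => hf0 x hx)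
    have hqd : (0:ℝ) ≤ q / d := by positivity
    -- split the sum
    have hsplit : ∑ i : Fin d, |f i - q / d|
        = ∑ i ∈ S, |f i - q / d| + ∑ i ∈ Sᶜ, |f i - q / d| :=
      (Finset.sum_add_sum_compl S _).symm
    have hcompl : ∑ i ∈ Sᶜ, |f i - q / d| = ((d : ℝ) - S.card) * (q / d) := by
      rw [Finset.sum_congr rfl (fun i hi => by
        rw [hf0 i (Finset.mem_compl.mp hi), zero_sub, abs_neg, abs_of_nonneg hqd])]
      rw [Finset.sum_const, nsmul_eq_mul, Finset.card_compl, Fintype.card_fin]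
      rw [Nat.cast_sub (Finset.card_le_univ S |>.trans (by simp))]
    have hSpart : ∑ i ∈ S, |f i - q / d| ≥ ((d - q : ℕ) : ℝ) - S.card * (q / d) := by
      calc ∑ i ∈ S, |f i - q / d| ≥ ∑ i ∈ S, (f i - q / d) :=
            Finset.sum_le_sum (fun i _ => le_abs_self _)
        _ = ((d - q : ℕ) : ℝ) - S.card * (q / d) := by
            rw [Finset.sum_sub_distrib, hfsum, Finset.sum_const, nsmul_eq_mul]
    have hN : ((d - q : ℕ) : ℝ) = (d : ℝ) - q := by
      rw [Nat.cast_sub hq]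
    have hs' : (S.card : ℝ) ≤ (d : ℝ) - q := by
      rw [← hN]; exact_mod_cast hsle
    rw [hsplit]
    have htot : ((d:ℝ) - q) - S.card * (q / d) + ((d : ℝ) - S.card) * (q / d)
        ≤ ∑ i ∈ S, |f i - q / d| + ∑ i ∈ Sᶜ, |f i - q / d| := by
      rw [hcompl]
      have := hSpart
      rw [hN] at this
      linarith
    refine le_trans ?_ htot
    rw [div_le_iff₀ hd0]
    have hr : (q:ℝ) / d * d = q := div_mul_cancel₀ _ hdne
    nlinarith [hr, mul_nonneg (by positivity : (0:ℝ) ≤ 2 * (q:ℝ))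
      (sub_nonneg.mpr hs'), Nat.cast_nonneg (α := ℝ) q]
  · rw [div_le_div_iff₀ (by norm_num) hd0]
    nlinarith [sq_nonneg ((d:ℝ) - 2*q)]
end

section
/- Let d, k, s be positive integers with k ≥ d, let n = 2ds, and equip ℝ^d with the ℓ1 norm. Then there exists a k×n matrix B = (b_i^j) with entries in ℝ^d such that every entry has ℓ1 norm at most 1, the total sum of the entries of B is zero, and for every row-permuted copy C of B the sum of the entries in the first column of C has ℓ1 norm at least d/2. -/
theorem sum_mod_helper (M s : ℕ) (f : ℕ → ℝ) :
    ∑ i : Fin (M * s), f ((i : ℕ) % M) = (s : ℝ) * ∑ b : Fin M, f (b : ℕ) := by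
  rw [← Fintype.sum_equiv (finProdFinEquiv.trans (finCongr (mul_comm s M)))
      (fun p => f ((p.2 : ℕ))) (fun i => f ((i : ℕ) % M)) ?_]
  · rw [Fintype.sum_prod_type]
    simp [Finset.sum_const, mul_comm]
  · rintro ⟨a, b⟩
    show f (b : ℕ) = f (((finCongr (mul_comm s M)) (finProdFinEquiv (a, b)) : ℕ) % M)
    simp [Nat.add_mul_mod_self_left, Nat.mod_eq_of_lt b.isLt]

theorem key_bound (d k : ℕ) (hd : 0 < d) (hk : d ≤ k) (q : Fin k → ℕ)
    (v : Fin d → ℝ)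
    (hv : ∀ c : Fin d, v c = ∑ j : Fin k, (if (j:ℕ) < d then
      (if q j < d then (if q j = (c:ℕ) then 1 else 0) else -(1/(d:ℝ))) else 0)) :
    (d:ℝ)/2 ≤ ∑ c, |v c| := by
  classical
  have hd' : (0:ℝ) < d := by exact_mod_cast hd
  set S : Finset (Fin k) := Finset.univ.filter (fun j : Fin k => (j:ℕ) < d) with hS
  set Sp : Finset (Fin k) := S.filter (fun j => q j < d) with hSp
  set Sm : Finset (Fin k) := S.filter (fun j => ¬ q j < d) with hSm
  set m : ℝ := (Sm.card : ℝ) with hm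
  set A : Fin d → ℝ := fun c => ((Sp.filter fun j => q j = (c:ℕ)).card : ℝ) with hA
  have hScard : S.card = d := by
    have himg : S = Finset.image (Fin.castLE hk) Finset.univ := by
      ext j
      simp only [hS, Finset.mem_filter, Finset.mem_univ, true_and, Finset.mem_image]
      constructor
      · intro hj; exact ⟨⟨(j:ℕ), hj⟩, rfl⟩
      · rintro ⟨t, -, rfl⟩; exact t.isLt
    rw [himg, Finset.card_image_of_injective _ (Fin.castLE_injective hk),
      Finset.card_univ, Fintype.card_fin]
  have hcards : Sp.card + Sm.card = d := by
    rw [hSp, hSm, Finset.card_filter_add_card_filter_not, hScard]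
  have hm0 : (0:ℝ) ≤ m := by positivity
  have hmd : m ≤ d := by
    rw [hm]
    exact_mod_cast le_trans (Finset.card_le_card (Finset.filter_subset _ _))
      (le_of_eq hScard)
  have hvc : ∀ c : Fin d, v c = A c - m / d := by
    intro c
    rw [hv c]
    rw [← Finset.sum_subset (Finset.subset_univ S) (by
      intro j _ hj
      rw [hS, Finset.mem_filter] at hj
      simp only [Finset.mem_univ, true_and] at hj
      simp [hj])]
    rw [← Finset.sum_filter_add_sum_filter_not S (fun j => q j < d)]
    have hp : ∑ j ∈ Sp, (if (j:ℕ) < d then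
        (if q j < d then (if q j = (c:ℕ) then (1:ℝ) else 0) else -(1/(d:ℝ))) else 0)
        = ∑ j ∈ Sp, (if q j = (c:ℕ) then (1:ℝ) else 0) := by
      refine Finset.sum_congr rfl fun j hj => ?_
      rw [hSp, Finset.mem_filter, hS, Finset.mem_filter] at hj
      rw [if_pos hj.1.2, if_pos hj.2]
    have hn : ∑ j ∈ Sm, (if (j:ℕ) < d then
        (if q j < d then (if q j = (c:ℕ) then (1:ℝ) else 0) else -(1/(d:ℝ))) else 0)
        = ∑ j ∈ Sm, (-(1/(d:ℝ))) := by
      refine Finset.sum_congr rfl fun j hj => ?_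
      rw [hSm, Finset.mem_filter, hS, Finset.mem_filter] at hj
      rw [if_pos hj.1.2, if_neg hj.2]
    rw [hp, hn, Finset.sum_boole, Finset.sum_const, nsmul_eq_mul]
    rw [hA]
    push_cast
    ring
  have hsumA : ∑ c : Fin d, A c = (Sp.card : ℝ) := by
    rw [hA]
    simp_rw [← Finset.sum_boole]
    rw [Finset.sum_comm]
    rw [Finset.sum_congr rfl (fun j hj => ?_), Finset.sum_const, nsmul_eq_mul, mul_one]
    have hqj : q j < d := by
      rw [hSp, Finset.mem_filter] at hj
      exact hj.2
    have h2 : ∀ c : Fin d, (q j = (c:ℕ)) = ((⟨q j, hqj⟩ : Fin d) = c) := by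
      intro c; rw [eq_iff_iff]
      exact ⟨fun h => Fin.ext h, fun h => by exact_mod_cast congrArg Fin.val h⟩
    simp_rw [h2]
    rw [Finset.sum_ite_eq]
    simp
  have hpoint : ∀ c : Fin d, (1 - 2*(m/d)) * (A c) + m/d ≤ |v c| := by
    intro c
    rw [hvc c]
    have hq1 : m/d ≤ 1 := by
      rw [div_le_one hd']; exact hmd
    have hq0 : (0:ℝ) ≤ m/d := div_nonneg hm0 hd'.le
    rcases Nat.eq_zero_or_pos (Sp.filter fun j => q j = (c:ℕ)).card with h|h
    · have hA0 : A c = 0 := by rw [hA]; simp [h]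
      rw [hA0, zero_sub, abs_neg, abs_of_nonneg hq0]
      linarith
    · have ha : (1:ℝ) ≤ A c := by
        show (1:ℝ) ≤ ((Sp.filter fun j => q j = (c:ℕ)).card : ℝ)
        exact_mod_cast h
      rw [abs_of_nonneg (by linarith : (0:ℝ) ≤ A c - m/d)]
      nlinarith
  calc (d:ℝ)/2 ≤ (1 - 2*(m/d)) * ((d:ℝ) - m) + (d:ℝ)*(m/d) := by
        have key : (1 - 2*(m/d)) * ((d:ℝ) - m) + (d:ℝ)*(m/d) - (d:ℝ)/2
            = ((d:ℝ) - 2*m)^2 / (2*d) := by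
          field_simp
          ring
        nlinarith [div_nonneg (sq_nonneg ((d:ℝ) - 2*m)) (by positivity : (0:ℝ) ≤ 2*d)]
    _ = ∑ c : Fin d, ((1 - 2*(m/d)) * (A c) + m/d) := by
        rw [Finset.sum_add_distrib, ← Finset.mul_sum, hsumA, Finset.sum_const,
          Finset.card_univ, Fintype.card_fin, nsmul_eq_mul]
        have hSpcard : (Sp.card : ℝ) = (d:ℝ) - m := by
          rw [hm, eq_sub_iff_add_eq]
          exact_mod_cast hcards
        rw [hSpcard]
    _ ≤ _ := Finset.sum_le_sum fun c _ => hpoint c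

/-- The ℓ1 lower bound for all `k ≥ d` and `n = 2ds`: there is a `k × n` matrix
`B` with entries in `ℝ^d` (with the ℓ1 norm) of norm at most `1` whose total
sum of entries is zero, such that in every row-permuted copy `C` of `B` the sum
of the entries in the first column of `C` has ℓ1 norm at least `d/2`. -/
theorem l1_lower_bound_general
    (d k s : ℕ) (hd : 0 < d) (hs : 0 < s) (hk : d ≤ k) :
    ∃ B : Fin k → Fin (2 * d * s) → PiLp 1 (fun _ : Fin d => ℝ),
      (∀ j i, ‖B j i‖ ≤ 1) ∧
      (∑ j : Fin k, ∑ i : Fin (2 * d * s), B j i = 0) ∧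
      ∀ π : Fin k → Equiv.Perm (Fin (2 * d * s)),
        (d : ℝ) / 2 ≤
          ‖∑ j : Fin k, B j (π j ⟨0, by positivity⟩)‖ := by
  classical
  have hd' : (0:ℝ) < d := by exact_mod_cast hd
  have hnorm : ∀ f : PiLp 1 (fun _ : Fin d => ℝ), ‖f‖ = ∑ c, |f c| := by
    intro f
    rw [PiLp.norm_eq_sum (by norm_num)]
    simp [Real.norm_eq_abs]
  refine ⟨fun j i => WithLp.toLp 1 fun c => if (j:ℕ) < d then
      (if (i:ℕ) % (2*d) < d then (if (i:ℕ) % (2*d) = (c:ℕ) then 1 else 0)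
        else -(1/(d:ℝ))) else 0, ?_, ?_, ?_⟩
  · -- norm bound
    intro j i
    rw [hnorm]
    by_cases hj : (j:ℕ) < d
    · by_cases hi : (i:ℕ) % (2*d) < d
      · simp only [hj, hi, if_true]
        have h2 : ∀ c : Fin d, ((i:ℕ) % (2*d) = (c:ℕ)) = ((⟨(i:ℕ) % (2*d), hi⟩ : Fin d) = c) := by
          intro c; rw [eq_iff_iff]
          exact ⟨fun h => Fin.ext h, fun h => by exact_mod_cast congrArg Fin.val h⟩
        simp_rw [h2]
        simp [apply_ite abs, Finset.sum_ite_eq]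
      · simp only [hj, hi, if_true, if_false]
        rw [Finset.sum_const, Finset.card_univ, Fintype.card_fin]
        have h3 : |(-(1/(d:ℝ)))| = 1/d := by
          rw [abs_neg, abs_of_nonneg]; positivity
        rw [h3, nsmul_eq_mul, mul_one_div, div_self (by positivity : (d:ℝ) ≠ 0)]
    · simp [hj]
  · -- total sum zero
    ext c
    rw [WithLp.ofLp_sum, Finset.sum_apply, show (0 : PiLp 1 (fun _ : Fin d => ℝ)) c = (0:ℝ) from rfl]
    refine Finset.sum_eq_zero fun j _ => ?_
    rw [WithLp.ofLp_sum, Finset.sum_apply]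
    by_cases hj : (j:ℕ) < d
    · simp only [hj, if_true, WithLp.ofLp_toLp]
      have := sum_mod_helper (2*d) s (fun x =>
        if x < d then (if x = (c:ℕ) then 1 else 0) else -(1/(d:ℝ)))
      rw [this]
      have hsplit : ∑ b : Fin (2*d), (fun x =>
          if x < d then (if x = (c:ℕ) then (1:ℝ) else 0) else -(1/(d:ℝ))) (b:ℕ) = 0 := by
        rw [Fin.sum_univ_eq_sum_range (fun x => if x < d then (if x = (c:ℕ) then (1:ℝ) else 0) else -(1/(d:ℝ))) (2*d)]
        rw [Finset.range_eq_Ico, ← Finset.sum_Ico_consecutive _ (Nat.zero_le d) (by omega : d ≤ 2*d)]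
        have h1 : ∑ x ∈ Finset.Ico 0 d, (if x < d then (if x = (c:ℕ) then (1:ℝ) else 0) else -(1/(d:ℝ))) = 1 := by
          rw [← Finset.range_eq_Ico]
          rw [Finset.sum_congr rfl (fun x hx => by
            rw [if_pos (Finset.mem_range.mp hx)])]
          rw [Finset.sum_ite_eq' (Finset.range d) ((c:ℕ)) (fun _ => (1:ℝ))]
          simp [c.isLt]
        have h2 : ∑ x ∈ Finset.Ico d (2*d), (if x < d then (if x = (c:ℕ) then (1:ℝ) else 0) else -(1/(d:ℝ))) = -1 := by
          rw [Finset.sum_congr rfl (fun x hx => by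
            rw [if_neg (by simpa using (Finset.mem_Ico.mp hx).1.not_gt)])]
          rw [Finset.sum_const, Nat.card_Ico]
          have : 2*d - d = d := by omega
          rw [this, nsmul_eq_mul, mul_neg, mul_one_div, div_self (by positivity : (d:ℝ) ≠ 0)]
        simp only [h1, h2]
        ring
      rw [hsplit, mul_zero]
    · simp [hj]
  · -- main bound
    intro π
    rw [hnorm]
    refine key_bound d k hd hk
      (fun j => ((π j ⟨0, by positivity⟩ : Fin (2*d*s)) : ℕ) % (2*d)) _ fun c => ?_
    rw [WithLp.ofLp_sum, Finset.sum_apply]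
end

section
/- Let d ≥ 4 be an integer, let k = ⌈(2^d − 1)/d⌉, let K = {x ∈ ℝ^d : x_i ≥ −1 for all i ∈ {1,…,d} and ∑_{i=1}^d x_i ≤ 2^d}, and let ‖x‖_K = min{t ≥ 0 : x ∈ tK} be the gauge of K. Then there exists a k×d matrix A = (a_i^j) with entries in ℝ^d such that ‖a_i^j‖_K ≤ 1 for all i, j, the total sum of the entries of A is zero, and for every row-permuted copy C of A the sum S of the entries in the first column of C satisfies ‖S‖_K ≥ k − 2 ≥ 2^d/(2d). -/
open Finset Pointwise


theorem aux1 (d : ℕ) (hd : 4 ≤ d) : d * d + 2 ≤ 2 ^ d + d := by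
  induction d with
  | zero => omega
  | succ n ih =>
    rcases Nat.lt_or_ge n 4 with h | h
    · have hn : n = 3 := by omega
      subst hn; norm_num
    · have h1 := ih h
      have h2 : n < 2 ^ n := Nat.lt_two_pow_self
      have h3 : 2 ^ (n + 1) = 2 * 2 ^ n := by ring
      nlinarith

theorem aux2 (d : ℕ) (hd : 5 ≤ d) : 4 * d + 2 ≤ 2 ^ d := by
  induction d with
  | zero => omega
  | succ n ih =>
    rcases Nat.lt_or_ge n 5 with h | h
    · have hn : n = 4 := by omega
      subst hn; norm_num
    · have h1 := ih h
      have h3 : 2 ^ (n + 1) = 2 * 2 ^ n := by ring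
      omega

/-- The example showing that the matrix Steinitz theorem fails for
non-symmetric seminorms: for `d ≥ 4`, `k = ⌈(2^d - 1)/d⌉` and the gauge of
`K = {x ∈ ℝ^d : x_i ≥ -1 for all i, ∑ x_i ≤ 2^d}`, there is a `k × d` matrix
`A` with entries of gauge at most `1` and total sum of entries zero, such that
in every row-permuted copy `C` of `A` the sum `S` of the entries in the first
column of `C` satisfies `gauge K S ≥ k - 2 ≥ 2^d / (2d)`. -/
theorem nonsymmetric_example
    (d k : ℕ) (hd : 4 ≤ d)
    (hk : k = ⌈((2 : ℚ) ^ d - 1) / d⌉₊)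
    (K : Set (Fin d → ℝ))
    (hK : K = {x : Fin d → ℝ | (∀ i, -1 ≤ x i) ∧ ∑ i : Fin d, x i ≤ 2 ^ d}) :
    ∃ A : Fin k → Fin d → (Fin d → ℝ),
      (∀ j i, gauge K (A j i) ≤ 1) ∧
      (∑ j : Fin k, ∑ i : Fin d, A j i = 0) ∧
      ((2 : ℝ) ^ d / (2 * d) ≤ (k : ℝ) - 2) ∧
      ∀ π : Fin k → Equiv.Perm (Fin d),
        (k : ℝ) - 2 ≤ gauge K (∑ j : Fin k, A j (π j ⟨0, by omega⟩)) := by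
  have hdn : 0 < d := by omega
  have hd0 : (0:ℚ) < d := by exact_mod_cast hdn
  have hone : (1:ℕ) ≤ 2 ^ d := Nat.one_le_two_pow
  have honeq : (1:ℚ) ≤ 2 ^ d := by exact_mod_cast hone
  have hkd1 : 2 ^ d - 1 ≤ k * d := by
    have h1 : ((2:ℚ) ^ d - 1) / d ≤ k := by rw [hk]; exact Nat.le_ceil _
    have h2 : ((2:ℚ) ^ d - 1) ≤ k * d := by
      rw [div_le_iff₀ hd0] at h1; linarith
    have h3 : ((2 ^ d - 1 : ℕ) : ℚ) ≤ ((k * d : ℕ) : ℚ) := by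
      push_cast [Nat.cast_sub hone]; push_cast at h2; linarith
    exact_mod_cast h3
  have hkd2 : k * d < 2 ^ d - 1 + d := by
    have h1 : (k:ℚ) < ((2:ℚ) ^ d - 1) / d + 1 := by
      rw [hk]; exact Nat.ceil_lt_add_one (div_nonneg (by linarith) hd0.le)
    have h2 : ((k:ℚ) - 1) * d < 2 ^ d - 1 := by
      rw [← lt_div_iff₀ hd0]; linarith
    have h2' : (k:ℚ) * d < 2 ^ d - 1 + d := by nlinarith
    have h3 : ((k * d : ℕ) : ℚ) < ((2 ^ d - 1 + d : ℕ) : ℚ) := by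
      push_cast [Nat.cast_sub hone]; push_cast at h2'; linarith
    exact_mod_cast h3
  have hdk : d ≤ k := by
    obtain ⟨m, hm⟩ : ∃ m, d = m + 1 := ⟨d - 1, by omega⟩
    subst hm
    have h1 := aux1 (m+1) hd
    have e : 2 ^ (m+1) - 1 + 1 = 2 ^ (m+1) := by omega
    have key : m * (m+1) < k * (m+1) := by nlinarith [hkd1, h1, e]
    have := Nat.lt_of_mul_lt_mul_right key
    omega
  have hratio : ((2 : ℝ) ^ d / (2 * d) ≤ (k : ℝ) - 2) := by
    rcases Nat.lt_or_ge d 5 with h5 | h5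
    · have hd4 : d = 4 := by omega
      subst hd4
      have hk4 : k = 4 := by norm_num at hkd1 hkd2; omega
      subst hk4; norm_num
    · have hR1 : (2:ℝ) ^ d - 1 ≤ (k:ℝ) * d := by
        have h : ((2 ^ d - 1 : ℕ) : ℝ) ≤ ((k * d : ℕ) : ℝ) := by exact_mod_cast hkd1
        push_cast [Nat.cast_sub hone] at h; push_cast; linarith
      have hR2 : 4 * (d:ℝ) + 2 ≤ 2 ^ d := by exact_mod_cast aux2 d h5
      have hdR : (0:ℝ) < d := by exact_mod_cast hdn
      rw [div_le_iff₀ (by positivity)]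
      nlinarith
  -- definitions for the construction
  set s : ℕ := k * d - (2 ^ d - 1) with hsdef
  have hs : 2 ^ d - 1 + s = k * d := by omega
  have hsd : s < d := by omega
  have hkn : 0 < k := by omega
  have hkR : (0:ℝ) < k := by exact_mod_cast hkn
  subst hK
  set K : Set (Fin d → ℝ) := {x : Fin d → ℝ | (∀ i, -1 ≤ x i) ∧ ∑ i : Fin d, x i ≤ 2 ^ d} with hK
  refine ⟨fun j i m => (if ((j:ℕ) < d ∧ m = i) then (2:ℝ)^(j:ℕ) else 0) +
      (if ((j:ℕ) = d - 1 ∧ d - s ≤ (i:ℕ)) then 0 else -1), ?_, ?_, ?_⟩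
  -- generic computations
  case refine_1 =>
    intro j i
    apply gauge_le_one_of_mem
    dsimp only
    constructor
    · intro m
      beta_reduce
      have h1 : (0:ℝ) ≤ (if ((j:ℕ) < d ∧ m = i) then (2:ℝ)^(j:ℕ) else 0) := by
        split_ifs <;> positivity
      have h2 : (-1:ℝ) ≤ (if ((j:ℕ) = d - 1 ∧ d - s ≤ (i:ℕ)) then (0:ℝ) else -1) := by
        split_ifs <;> norm_num
      linarith
    · rw [Finset.sum_add_distrib]
      have h1 : ∑ m : Fin d, (if ((j:ℕ) < d ∧ m = i) then (2:ℝ)^(j:ℕ) else 0)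
          = if (j:ℕ) < d then (2:ℝ)^(j:ℕ) else 0 := by
        simp only [ite_and]
        by_cases hj : (j:ℕ) < d
        · simp [hj, Finset.sum_ite_eq' Finset.univ i (fun _ => (2:ℝ)^(j:ℕ))]
        · simp [hj]
      have h2 : ∑ _m : Fin d, (if ((j:ℕ) = d - 1 ∧ d - s ≤ (i:ℕ)) then (0:ℝ) else -1) ≤ 0 := by
        apply Finset.sum_nonpos
        intro m _
        split_ifs <;> norm_num
      have h3 : (if (j:ℕ) < d then (2:ℝ)^(j:ℕ) else 0) ≤ 2^d := by
        split_ifs with hj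
        · exact pow_le_pow_right₀ (by norm_num) (by omega)
        · positivity
      linarith
  case refine_2 =>
    funext m
    rw [Finset.sum_apply]
    simp only [Finset.sum_apply]
    have expand : ∀ j : Fin k, ∑ i : Fin d,
        ((if ((j:ℕ) < d ∧ m = i) then (2:ℝ)^(j:ℕ) else 0) +
         (if ((j:ℕ) = d - 1 ∧ d - s ≤ (i:ℕ)) then 0 else -1))
        = (if (j:ℕ) < d then (2:ℝ)^(j:ℕ) else 0)
          + (-(d:ℝ) + (if (j:ℕ) = d - 1 then (s:ℝ) else 0)) := by
      intro j
      rw [Finset.sum_add_distrib]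
      congr 1
      · simp only [ite_and]
        by_cases hj : (j:ℕ) < d
        · simp [hj, Finset.sum_ite_eq Finset.univ m (fun _ => (2:ℝ)^(j:ℕ))]
        · simp [hj]
      · by_cases hj : (j:ℕ) = d - 1
        · simp only [hj, true_and, if_pos]
          have : ∀ i : Fin d, (if (d - s ≤ (i:ℕ)) then (0:ℝ) else -1)
              = (if ((i:ℕ) < d - s) then (-1:ℝ) else 0) := by
            intro i
            rcases Nat.lt_or_ge (i:ℕ) (d - s) with h | h
            · rw [if_neg (by omega), if_pos h]
            · rw [if_pos h, if_neg (by omega)]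
          rw [Finset.sum_congr rfl (fun i _ => this i)]
          rw [Fin.sum_univ_eq_sum_range (fun n => if (n < d - s) then (-1:ℝ) else 0) d]
          have hsub : ∑ n ∈ Finset.range (d - s), (if (n < d - s) then (-1:ℝ) else 0)
              = ∑ n ∈ Finset.range d, (if (n < d - s) then (-1:ℝ) else 0) := by
            apply Finset.sum_subset (Finset.range_subset_range.2 (by omega))
            intro x hx hx'
            simp only [Finset.mem_range] at hx hx'
            rw [if_neg (by omega)]
          rw [← hsub, Finset.sum_congr rfl (fun n hn => if_pos (Finset.mem_range.1 hn)),
            Finset.sum_const]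
          simp only [Finset.card_range, nsmul_eq_mul]
          have : ((d - s : ℕ) : ℝ) = (d:ℝ) - s := by
            push_cast [Nat.cast_sub hsd.le]; ring
          rw [this]; ring
        · rw [Finset.sum_congr rfl (fun i _ => if_neg (by simp [hj]))]
          rw [Finset.sum_const, if_neg hj]
          simp
    rw [Finset.sum_congr rfl (fun j _ => expand j), Finset.sum_add_distrib,
      Finset.sum_add_distrib]
    have hgeom : ∑ j : Fin k, (if (j:ℕ) < d then (2:ℝ)^(j:ℕ) else 0) = 2^d - 1 := by
      rw [Fin.sum_univ_eq_sum_range (fun n => if n < d then (2:ℝ)^n else 0) k]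
      rw [← Finset.sum_subset (Finset.range_subset_range.2 hdk) (fun x hx hx' => by
        simp only [Finset.mem_range] at hx hx'
        rw [if_neg (by omega)])]
      rw [Finset.sum_congr rfl (fun n hn => if_pos (Finset.mem_range.1 hn))]
      rw [geom_sum_eq (by norm_num : (2:ℝ) ≠ 1)]
      norm_num
    have hconst : ∑ _j : Fin k, (-(d:ℝ)) = -(k:ℝ) * d := by
      rw [Finset.sum_const]; simp only [Finset.card_univ, Fintype.card_fin, nsmul_eq_mul]; ring
    have hind : ∑ j : Fin k, (if (j:ℕ) = d - 1 then (s:ℝ) else 0) = s := by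
      rw [Fin.sum_univ_eq_sum_range (fun n => if n = d - 1 then (s:ℝ) else 0) k]
      rw [Finset.sum_ite_eq' (Finset.range k) (d-1) (fun _ => (s:ℝ))]
      rw [if_pos (Finset.mem_range.2 (by omega))]
    rw [hgeom, hconst, hind]
    have hcast : (2:ℝ)^d - 1 + s = k * d := by
      have h := congrArg (fun n : ℕ => (n : ℝ)) hs
      push_cast [Nat.cast_sub hone] at h
      linarith
    simp only [Pi.zero_apply]
    linarith
  case refine_3 =>
    refine ⟨hratio, ?_⟩
    intro π
    have main : ∀ f : Fin k → Fin d,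
        (k : ℝ) - 2 ≤ gauge K
          (∑ j : Fin k, (fun m => (if ((j:ℕ) < d ∧ m = f j) then (2:ℝ)^(j:ℕ) else 0) +
            (if ((j:ℕ) = d - 1 ∧ d - s ≤ ((f j):ℕ)) then 0 else -1) : Fin d → ℝ)) := by
      intro f
      set S : Fin d → ℝ := ∑ j : Fin k,
          (fun m => (if ((j:ℕ) < d ∧ m = f j) then (2:ℝ)^(j:ℕ) else 0) +
            (if ((j:ℕ) = d - 1 ∧ d - s ≤ ((f j):ℕ)) then 0 else -1) : Fin d → ℝ) with hSdef
      set T : Fin d → ℝ := fun m => ∑ j : Fin k,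
          (if ((j:ℕ) < d ∧ m = f j) then (2:ℝ)^(j:ℕ) else 0) with hTdef
      set C : ℝ := ∑ j : Fin k,
          (if ((j:ℕ) = d - 1 ∧ d - s ≤ ((f j):ℕ)) then (0:ℝ) else -1) with hCdef
      have happ : ∀ m, S m = T m + C := by
        intro m
        rw [hSdef, Finset.sum_apply, hTdef, hCdef, ← Finset.sum_add_distrib]
      have hT0 : ∀ m, 0 ≤ T m := by
        intro m
        apply Finset.sum_nonneg
        intro j _
        split_ifs <;> positivity
      set jd : Fin k := ⟨d - 1, by omega⟩ with hjd
      have hCle : C ≤ -(k:ℝ) + 1 := by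
        have hineq : ∀ j : Fin k, (if ((j:ℕ) = d - 1 ∧ d - s ≤ ((f j):ℕ)) then (0:ℝ) else -1)
            ≤ if j = jd then 0 else -1 := by
          intro j
          by_cases hj : j = jd
          · rw [if_pos hj]; split_ifs <;> norm_num
          · rw [if_neg hj, if_neg]
            rintro ⟨h1, -⟩
            exact hj (Fin.ext (by rw [h1]))
        calc C ≤ ∑ j : Fin k, (if j = jd then (0:ℝ) else -1) :=
              Finset.sum_le_sum (fun j _ => hineq j)
          _ = -(k:ℝ) + 1 := by
              have he : ∀ j : Fin k, (if j = jd then (0:ℝ) else -1)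
                  = -1 + (if j = jd then (1:ℝ) else 0) := by
                intro j; split_ifs <;> norm_num
              rw [Finset.sum_congr rfl (fun j _ => he j), Finset.sum_add_distrib,
                Finset.sum_const, Finset.sum_ite_eq' Finset.univ jd (fun _ => (1:ℝ))]
              simp
      have hCge : -(k:ℝ) ≤ C := by
        calc -(k:ℝ) = ∑ _j : Fin k, (-1:ℝ) := by
              rw [Finset.sum_const]; simp
          _ ≤ C := Finset.sum_le_sum (fun j _ => by split_ifs <;> norm_num)
      have hTle : ∃ m : Fin d, T m ≤ 1 := by
        set g : Fin d → Fin d := fun j => f (Fin.castLE hdk j) with hg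
        by_cases hinj : Function.Injective g
        · refine ⟨g ⟨0, hdn⟩, ?_⟩
          have heq : T (g ⟨0, hdn⟩) = 1 := by
            rw [hTdef]
            beta_reduce
            rw [Finset.sum_eq_single_of_mem (⟨0, by omega⟩ : Fin k) (Finset.mem_univ _)]
            · rw [if_pos ⟨by simpa using hdn, rfl⟩]
              norm_num
            · intro b _ hb
              rw [if_neg]
              rintro ⟨hbd, hbe⟩
              apply hb
              have h1 : g ⟨(b:ℕ), hbd⟩ = f b := by
                rw [hg]; congr 1
              have h2 : (⟨(b:ℕ), hbd⟩ : Fin d) = ⟨0, hdn⟩ := hinj (by rw [h1, ← hbe])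
              have h3 : (b:ℕ) = 0 := by
                simpa using congrArg Fin.val h2
              exact Fin.ext h3
          rw [heq]
        · have hsurj : ¬ Function.Surjective g := by
            rwa [← Finite.injective_iff_surjective]
          simp only [Function.Surjective, not_forall] at hsurj
          obtain ⟨m, hm⟩ := hsurj
          push_neg at hm
          refine ⟨m, ?_⟩
          have heq : T m = 0 := by
            rw [hTdef]
            beta_reduce
            apply Finset.sum_eq_zero
            intro j _
            rw [if_neg]
            rintro ⟨hjd', hje⟩
            refine hm ⟨(j:ℕ), hjd'⟩ ?_
            show f (Fin.castLE hdk ⟨(j:ℕ), hjd'⟩) = m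
            have hcl : Fin.castLE hdk ⟨(j:ℕ), hjd'⟩ = j := by apply Fin.ext; rfl
            rw [hcl, ← hje]
          rw [heq]; norm_num
      have hTsum : ∑ m : Fin d, T m ≤ 2 ^ d - 1 := by
        rw [hTdef, Finset.sum_comm]
        have hrow : ∀ j : Fin k, ∑ m : Fin d, (if ((j:ℕ) < d ∧ m = f j) then (2:ℝ)^(j:ℕ) else 0)
            = if (j:ℕ) < d then (2:ℝ)^(j:ℕ) else 0 := by
          intro j
          simp only [ite_and]
          by_cases hj : (j:ℕ) < d
          · simp [hj, Finset.sum_ite_eq' Finset.univ (f j) (fun _ => (2:ℝ)^(j:ℕ))]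
          · simp [hj]
        rw [Finset.sum_congr rfl (fun j _ => hrow j)]
        have hgeom : ∑ j : Fin k, (if (j:ℕ) < d then (2:ℝ)^(j:ℕ) else 0) = 2^d - 1 := by
          rw [Fin.sum_univ_eq_sum_range (fun n => if n < d then (2:ℝ)^n else 0) k]
          rw [← Finset.sum_subset (Finset.range_subset_range.2 hdk) (fun x hx hx' => by
            simp only [Finset.mem_range] at hx hx'
            rw [if_neg (by omega)])]
          rw [Finset.sum_congr rfl (fun n hn => if_pos (Finset.mem_range.1 hn))]
          rw [geom_sum_eq (by norm_num : (2:ℝ) ≠ 1)]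
          norm_num
        rw [hgeom]
      -- membership : S ∈ k • K
      have hmemk : S ∈ (k:ℝ) • K := by
        rw [Set.mem_smul_set_iff_inv_smul_mem₀ hkR.ne']
        constructor
        · intro m
          have h1 : -(k:ℝ) ≤ S m := by
            rw [happ m]; linarith [hT0 m, hCge]
          have : ((k:ℝ)⁻¹ • S) m = (k:ℝ)⁻¹ * S m := rfl
          rw [this]
          rw [show (-1:ℝ) = (k:ℝ)⁻¹ * (-(k:ℝ)) by field_simp]
          exact mul_le_mul_of_nonneg_left h1 (by positivity)
        · have hk4 : (4:ℝ) ≤ k := by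
            have : 4 ≤ k := by omega
            exact_mod_cast this
          have hdC : ((Finset.univ : Finset (Fin d)).card) • C ≤ 0 := by
            simp only [Finset.card_univ, Fintype.card_fin, nsmul_eq_mul]
            have hC0 : C ≤ 0 := by linarith
            have hd0R : (0:ℝ) ≤ d := by positivity
            exact mul_nonpos_of_nonneg_of_nonpos hd0R hC0
          have h1 : ∑ m : Fin d, S m ≤ 2^d - 1 := by
            rw [Finset.sum_congr rfl (fun m _ => happ m), Finset.sum_add_distrib,
              Finset.sum_const]
            linarith [hTsum, hdC]
          have happly : ∀ m : Fin d, ((k:ℝ)⁻¹ • S) m = (k:ℝ)⁻¹ * S m := fun m => rfl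
          rw [Finset.sum_congr rfl (fun m _ => happly m), ← Finset.mul_sum]
          have hki : (k:ℝ)⁻¹ ≤ 1 := by
            rw [inv_le_one_iff₀]; right; linarith [hkR]
          have h2 : (k:ℝ)⁻¹ * ∑ m : Fin d, S m ≤ (k:ℝ)⁻¹ * (2^d - 1) := by
            apply mul_le_mul_of_nonneg_left h1 (by positivity)
          have h3 : (k:ℝ)⁻¹ * (2^d - 1) ≤ 1 * 2^d := by
            apply mul_le_mul hki (by norm_num) ?_ (by norm_num)
            have : (1:ℝ) ≤ 2^d := one_le_pow₀ (by norm_num)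
            linarith
          calc (k:ℝ)⁻¹ * ∑ m : Fin d, S m ≤ (k:ℝ)⁻¹ * (2^d - 1) := h2
            _ ≤ 1 * 2^d := h3
            _ = 2^d := one_mul _
      -- the bound
      unfold gauge
      refine le_csInf ⟨(k:ℝ), hkR, hmemk⟩ ?_
      rintro b ⟨hb0, hbmem⟩
      rw [Set.mem_smul_set] at hbmem
      obtain ⟨y, hy, hby⟩ := hbmem
      obtain ⟨m, hm⟩ := hTle
      have hSm : S m ≤ 2 - k := by rw [happ m]; linarith
      have hym : -1 ≤ y m := hy.1 m
      have : S m = b * y m := by rw [← hby]; rfl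
      nlinarith
    exact main (fun j => π j ⟨0, by omega⟩)
end
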